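/- Let C₂ > 0 and A ≥ 1 satisfy 27·A^{2/3} + C₂·A^{2/3} ≤ A. Suppose Γ : ℕ → ℝ≥0 satisfies Γ(1) ≤ A and, for every k ≥ 1, Γ(3^k) ≤ A^{−4/3}·3^{k+1}·Γ(3^{k−1})² + C₂·A^{2/3}·3^{−k}. Then Γ(3^k) ≤ A/3^k for all k ≥ 0, and consequently for every n ≥ 1 (choosing k with 3^{k−1} ≤ n < 3^k, assuming Γ is nonincreasing) Γ(n) ≤ 3A/n. -/

import Mathlib

/-- The induction scheme in Kozma–Nachmias's one-arm upper bound (Lemma 3.4). -/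
theorem stmt_9 (C₂ A : ℝ) (hC₂ : 0 < C₂) (hA : 1 ≤ A)
    (hconst : 27 * A ^ ((2:ℝ)/3) + C₂ * A ^ ((2:ℝ)/3) ≤ A)
    (Γ : ℕ → ℝ) (hΓ0 : ∀ n, 0 ≤ Γ n) (hbase : Γ 1 ≤ A)
    (hrec : ∀ k : ℕ, 1 ≤ k →
      Γ (3 ^ k) ≤ A ^ (-(4:ℝ)/3) * 3 ^ (k + 1) * (Γ (3 ^ (k - 1))) ^ 2 +
        C₂ * A ^ ((2:ℝ)/3) * (3 : ℝ) ^ (-(k:ℝ))) :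
    (∀ k : ℕ, Γ (3 ^ k) ≤ A / 3 ^ k) ∧
    (Antitone Γ → ∀ n : ℕ, 1 ≤ n → Γ n ≤ 3 * A / n) := by
  have hApos : (0:ℝ) < A := lt_of_lt_of_le one_pos hA
  have h3k : ∀ m : ℕ, (0:ℝ) < 3 ^ m := fun m => pow_pos (by norm_num) m
  have hA2 : A ^ (-(4:ℝ)/3) * A ^ 2 = A ^ ((2:ℝ)/3) := by
    rw [show (A:ℝ)^2 = A ^ ((2:ℕ):ℝ) from (Real.rpow_natCast A 2).symm,
      ← Real.rpow_add hApos]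
    norm_num
  have main : ∀ k : ℕ, Γ (3 ^ k) ≤ A / 3 ^ k := by
    intro k
    induction k with
    | zero => simpa using hbase
    | succ k ih =>
      have hr := hrec (k+1) (by omega)
      simp only [Nat.add_sub_cancel] at hr
      have hrw : (3:ℝ) ^ (-((k+1:ℕ):ℝ)) = ((3:ℝ) ^ (k+1))⁻¹ := by
        rw [Real.rpow_neg (by norm_num), Real.rpow_natCast]
      rw [hrw] at hr
      have hsq : Γ (3 ^ k) ^ 2 ≤ (A / 3 ^ k) ^ 2 := by
        apply pow_le_pow_left₀ (hΓ0 _) ih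
      have hcoef : (0:ℝ) ≤ A ^ (-(4:ℝ)/3) * 3 ^ (k + 1 + 1) := by positivity
      have h3ne : (3:ℝ) ^ k ≠ 0 := (h3k k).ne'
      have e3a : (3:ℝ) ^ (k+1+1) = 3 ^ k * 9 := by rw [pow_succ, pow_succ]; ring
      have e3b : (3:ℝ) ^ (k+1) = 3 ^ k * 3 := by rw [pow_succ]
      have key : A ^ (-(4:ℝ)/3) * 3 ^ (k+1+1) * (A / 3 ^ k) ^ 2
          = 27 * A ^ ((2:ℝ)/3) / 3 ^ (k+1) := by
        rw [e3a, e3b,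
          show A ^ (-(4:ℝ)/3) * ((3:ℝ)^k*9) * (A/3^k)^2
            = (A ^ (-(4:ℝ)/3) * A^2) * (((3:ℝ)^k*9) / ((3:ℝ)^k)^2) from by ring,
          hA2,
          show ((3:ℝ)^k*9) / ((3:ℝ)^k)^2 = 27 / ((3:ℝ)^k*3) from by
            field_simp; ring]
        ring
      calc Γ (3 ^ (k+1))
          ≤ A ^ (-(4:ℝ)/3) * 3 ^ (k+1+1) * (A / 3 ^ k) ^ 2
              + C₂ * A ^ ((2:ℝ)/3) * ((3:ℝ) ^ (k+1))⁻¹ :=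
            hr.trans (add_le_add (mul_le_mul_of_nonneg_left hsq hcoef) le_rfl)
        _ = (27 * A ^ ((2:ℝ)/3) + C₂ * A ^ ((2:ℝ)/3)) / 3 ^ (k+1) := by
            rw [key]; ring
        _ ≤ A / 3 ^ (k+1) := by gcongr
  refine ⟨main, fun hanti n hn => ?_⟩
  set k := Nat.log 3 n with hk
  have h1 : 3 ^ k ≤ n := Nat.pow_log_le_self 3 (by omega)
  have h2 : n < 3 ^ (k+1) := Nat.lt_pow_succ_log_self (by norm_num) n
  have hGn : Γ n ≤ Γ (3 ^ k) := hanti h1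
  have h2' : (n:ℝ) ≤ 3 ^ (k+1) := by
    calc (n:ℝ) ≤ ((3:ℕ) ^ (k+1) : ℕ) := by exact_mod_cast h2.le
      _ = (3:ℝ) ^ (k+1) := by norm_cast
  have hnpos : (0:ℝ) < n := by exact_mod_cast hn
  calc Γ n ≤ A / 3 ^ k := hGn.trans (main k)
    _ = 3 * A / 3 ^ (k+1) := by rw [pow_succ]; field_simp
    _ ≤ 3 * A / n := by gcongr
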